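/- arXiv:1106.2338 — 7 statements merged into one kernel-verified Lean document; each statement's English description precedes it below -/
import Mathlib

section
/- Let $X,Y$ be normed linear spaces with $Y$ finite dimensional (a Banach space). Let $S:X\rightrightarrows Y$ be locally closed at $(\bar x,\bar y)\in\mathrm{gph}(S)$ and let $H:X\rightrightarrows Y$ be positively homogeneous and compact-valued. If $S$ is pseudo strictly $H$-differentiable at $(\bar x,\bar y)$, then for all $\delta>0$ there are neighborhoods $U$ of $\bar x$ and $V$ of $\bar y$ such that for all $(x,y)\in\mathrm{gph}(S)\cap[U\times V]$ and all $p\in X\setminus\{0\}$, $DS(x\mid y)(p)\cap[-(H+\delta)(-p)]\neq\emptyset$, where $DS(x\mid y)$ is the graphical derivative defined via the tangent cone to $\mathrm{gph}(S)$ at $(x,y)$. -/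
open Metric Set Pointwise

/-- Graph of a set-valued map. -/
def gph {X Y : Type*} (S : X → Set Y) : Set (X × Y) := {p | p.2 ∈ S p.1}

/-- Positive homogeneity of a set-valued map. -/
def PosHomog {X Y : Type*} [NormedAddCommGroup X] [NormedSpace ℝ X]
    [NormedAddCommGroup Y] [NormedSpace ℝ Y] (H : X → Set Y) : Prop :=
  (∀ c : ℝ, 0 < c → ∀ y ∈ H 0, c • y ∈ H 0) ∧
  (∀ c : ℝ, 0 < c → ∀ w, H (c • w) = c • H w)

/-- Enlargement `(H + δ)(w) = H w + δ‖w‖𝔹`. -/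
def enl {X Y : Type*} [NormedAddCommGroup X] [NormedSpace ℝ X]
    [NormedAddCommGroup Y] [NormedSpace ℝ Y] (H : X → Set Y) (δ : ℝ) (w : X) : Set Y :=
  {y | ∃ h ∈ H w, ‖y - h‖ ≤ δ * ‖w‖}

/-- Pseudo strict `H`-differentiability of `S` at `(xb, yb)`. -/
def PseudoStrictDiff {X Y : Type*} [NormedAddCommGroup X] [NormedSpace ℝ X]
    [NormedAddCommGroup Y] [NormedSpace ℝ Y]
    (S : X → Set Y) (H : X → Set Y) (xb : X) (yb : Y) : Prop :=
  ∀ δ : ℝ, 0 < δ → ∃ U ∈ nhds xb, ∃ V ∈ nhds yb,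
    ∀ x ∈ U, ∀ x' ∈ U, ∀ y ∈ S x ∩ V, ∃ y' ∈ S x', y - y' ∈ enl H δ (x - x')

/-- Local closedness of `gph S` at `(xb, yb)`. -/
def LocallyClosedAt {X Y : Type*} [NormedAddCommGroup X] [NormedSpace ℝ X]
    [NormedAddCommGroup Y] [NormedSpace ℝ Y] (S : X → Set Y) (xb : X) (yb : Y) : Prop :=
  ∃ ε : ℝ, 0 < ε ∧ IsClosed (gph S ∩ Metric.closedBall (xb, yb) ε)

/-- The graphical (contingent) derivative `DS(x∣y)` of `S` at `(x, y)`. -/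
def graphDeriv {X Y : Type*} [NormedAddCommGroup X] [NormedSpace ℝ X]
    [NormedAddCommGroup Y] [NormedSpace ℝ Y]
    (S : X → Set Y) (x : X) (y : Y) (p : X) : Set Y :=
  {q | (p, q) ∈ tangentConeAt ℝ (gph S) (x, y)}


lemma enl_eq {X Y : Type*} [NormedAddCommGroup X] [NormedSpace ℝ X]
    [NormedAddCommGroup Y] [NormedSpace ℝ Y] (H : X → Set Y) (δ : ℝ) (w : X) :
    enl H δ w = H w + Metric.closedBall 0 (δ * ‖w‖) := by
  ext y
  constructor
  · rintro ⟨h, hh, hy⟩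
    exact ⟨h, hh, y - h, by simpa [Metric.mem_closedBall, dist_zero_right] using hy,
      by module⟩
  · rintro ⟨a, ha, b, hb, rfl⟩
    exact ⟨a, ha, by simpa [Metric.mem_closedBall, dist_zero_right] using hb⟩

set_option maxHeartbeats 1000000 in
theorem stmt4 {X Y : Type*} [NormedAddCommGroup X] [NormedSpace ℝ X]
    [NormedAddCommGroup Y] [NormedSpace ℝ Y] [FiniteDimensional ℝ Y]
    (S : X → Set Y) (H : X → Set Y) (xb : X) (yb : Y)
    (hgph : yb ∈ S xb) (hloc : LocallyClosedAt S xb yb)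
    (hH : PosHomog H) (hcpt : ∀ w, IsCompact (H w))
    (hdiff : PseudoStrictDiff S H xb yb) :
    ∀ δ : ℝ, 0 < δ → ∃ U ∈ nhds xb, ∃ V ∈ nhds yb,
      ∀ x ∈ U, ∀ y ∈ V, y ∈ S x → ∀ p : X, p ≠ 0 →
        (graphDeriv S x y p ∩ (-enl H δ (-p))).Nonempty := by
  intro δ hδ
  obtain ⟨U, hU, V, hV, hP⟩ := hdiff δ hδ
  obtain ⟨r, hr, hball⟩ := Metric.mem_nhds_iff.mp hU
  refine ⟨Metric.ball xb (r / 2), Metric.ball_mem_nhds _ (by linarith), V, hV, ?_⟩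
  intro x hx y hyV hyS p hp
  have hpn : (0:ℝ) < ‖p‖ + 1 := by positivity
  set ε : ℝ := r / (2 * (‖p‖ + 1)) with hε
  have hεpos : 0 < ε := by positivity
  set τ : ℕ → ℝ := fun n => ε / (n + 1) with hτdef
  have hτpos : ∀ n, 0 < τ n := fun n => by positivity
  have hτle : ∀ n, τ n ≤ ε := by
    intro n
    have h1 : (1:ℝ) ≤ (n:ℝ) + 1 := by
      have : (0:ℝ) ≤ (n:ℝ) := Nat.cast_nonneg n
      linarith
    calc τ n = ε / ((n:ℝ)+1) := rfl
    _ ≤ ε / 1 := div_le_div_of_nonneg_left hεpos.le (by norm_num) h1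
    _ = ε := by ring
  have hmem : ∀ n, x + τ n • p ∈ U := by
    intro n
    apply hball
    have h1 : ‖x + τ n • p - xb‖ ≤ ‖x - xb‖ + τ n * ‖p‖ := by
      calc ‖x + τ n • p - xb‖ = ‖(x - xb) + τ n • p‖ := by
            rw [show x + τ n • p - xb = (x - xb) + τ n • p from by abel]
      _ ≤ ‖x - xb‖ + ‖τ n • p‖ := norm_add_le _ _
      _ = ‖x - xb‖ + τ n * ‖p‖ := by rw [norm_smul, Real.norm_of_nonneg (hτpos n).le]
    have h2 : τ n * ‖p‖ < r / 2 := by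
      have h2a : τ n * ‖p‖ ≤ ε * ‖p‖ := mul_le_mul_of_nonneg_right (hτle n) (norm_nonneg p)
      have h3 : ε * ‖p‖ < r / 2 := by
        rw [hε, div_mul_eq_mul_div, div_lt_div_iff₀ (by positivity) (by norm_num)]
        nlinarith [norm_nonneg p]
      linarith
    have hx' : ‖x - xb‖ < r / 2 := by
      simpa [Metric.mem_ball, dist_eq_norm] using hx
    simp only [Metric.mem_ball, dist_eq_norm]
    linarith
  have hxU : x ∈ U := hball (Metric.ball_subset_ball (by linarith) hx)
  have hstep : ∀ n, ∃ y' ∈ S (x + τ n • p), y - y' ∈ enl H δ (x - (x + τ n • p)) := by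
    intro n
    exact hP x hxU (x + τ n • p) (hmem n) y ⟨hyS, hyV⟩
  choose y' hy'S hy'enl using hstep
  have hqK : ∀ n, (τ n)⁻¹ • (y' n - y) ∈ -enl H δ (-p) := by
    intro n
    have h1 : x - (x + τ n • p) = τ n • (-p) := by
      rw [smul_neg]; abel
    have h2 := hy'enl n
    rw [h1] at h2
    obtain ⟨h, hh, hnorm⟩ := h2
    rw [hH.2 (τ n) (hτpos n) (-p)] at hh
    obtain ⟨h', hh', rfl⟩ := hh
    rw [Set.mem_neg]
    refine ⟨h', hh', ?_⟩
    have h3 : -((τ n)⁻¹ • (y' n - y)) - h' = (τ n)⁻¹ • ((y - y' n) - τ n • h') := by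
      rw [smul_sub, smul_sub, smul_smul, inv_mul_cancel₀ (hτpos n).ne', one_smul]
      module
    rw [h3, norm_smul, Real.norm_of_nonneg (inv_nonneg.mpr (hτpos n).le)]
    have h4 : ‖y - y' n - τ n • h'‖ ≤ δ * (τ n * ‖p‖) := by
      calc ‖y - y' n - τ n • h'‖ ≤ δ * ‖τ n • (-p)‖ := hnorm
      _ = δ * (τ n * ‖p‖) := by
          rw [norm_smul, Real.norm_of_nonneg (hτpos n).le, norm_neg]
    calc (τ n)⁻¹ * ‖y - y' n - τ n • h'‖ ≤ (τ n)⁻¹ * (δ * (τ n * ‖p‖)) :=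
          mul_le_mul_of_nonneg_left h4 (inv_nonneg.mpr (hτpos n).le)
    _ = δ * ‖p‖ := by
          field_simp
          ring_nf
          exact mul_inv_cancel₀ (hτpos n).ne'
    _ = δ * ‖-p‖ := by rw [norm_neg]
  have hKcpt : IsCompact (-enl H δ (-p)) := by
    rw [enl_eq]
    exact ((hcpt (-p)).add (isCompact_closedBall 0 _)).neg
  obtain ⟨a, haK, φ, hφ, hconv⟩ := hKcpt.tendsto_subseq hqK
  refine ⟨a, ?_, haK⟩
  show (p, a) ∈ tangentConeAt ℝ (gph S) (x, y)
  refine mem_tangentConeAt_iff_exists_seq_norm_tendsto_atTop.mpr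
    ⟨fun n => (τ (φ n))⁻¹, fun n => (τ (φ n) • p, y' (φ n) - y), ?_, ?_, ?_⟩
  swap
  · filter_upwards with n
    have heq : (x, y) + (τ (φ n) • p, y' (φ n) - y) = (x + τ (φ n) • p, y' (φ n)) := by
      rw [Prod.mk_add_mk]
      refine congrArg _ ?_
      abel
    show (x, y) + (τ (φ n) • p, y' (φ n) - y) ∈ gph S
    rw [heq]
    exact hy'S (φ n)
  · have h1 : Filter.Tendsto (fun n : ℕ => (τ n)⁻¹) Filter.atTop Filter.atTop := by
      have h2 : ∀ n : ℕ, (τ n)⁻¹ = ε⁻¹ * ((n:ℝ) + 1) := by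
        intro n
        show (ε / ((n:ℝ)+1))⁻¹ = ε⁻¹ * ((n:ℝ) + 1)
        rw [inv_div, div_eq_inv_mul]
      simp only [h2]
      exact (Filter.tendsto_atTop_add_const_right _ 1
        tendsto_natCast_atTop_atTop).const_mul_atTop (inv_pos.mpr hεpos)
    exact (h1.comp hφ.tendsto_atTop).congr
      fun n => (Real.norm_of_nonneg (inv_nonneg.mpr (hτpos (φ n)).le)).symm
  · have heq : ∀ n, (τ (φ n))⁻¹ • ((τ (φ n) • p, y' (φ n) - y) : X × Y)
        = (p, (τ (φ n))⁻¹ • (y' (φ n) - y)) := by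
      intro n
      rw [Prod.smul_mk, smul_smul, inv_mul_cancel₀ (hτpos (φ n)).ne', one_smul]
    simp only [heq]
    exact Filter.Tendsto.prodMk_nhds tendsto_const_nhds hconv
end

section
/- Let $S_1:\mathbb{R}\rightrightarrows\mathbb{R}$ be defined by $S_1(x)=(-\infty,-|x|]\cup[|x|,\infty)$, and let $H:\mathbb{R}\rightrightarrows\mathbb{R}$ be a prefan. Then $S_1$ is pseudo strictly $H$-differentiable at $(0,0)$ if and only if $[-|p|,|p|]\subset H(p)$ for all $p\in\mathbb{R}$. -/
open Metric Set Pointwise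

/-- A prefan: nonempty convex compact values, positively homogeneous, finite outer norm. -/
def Prefan {X Y : Type*} [NormedAddCommGroup X] [NormedSpace ℝ X]
    [NormedAddCommGroup Y] [NormedSpace ℝ Y] (H : X → Set Y) : Prop :=
  (∀ p, (H p).Nonempty ∧ Convex ℝ (H p) ∧ IsCompact (H p)) ∧
  PosHomog H ∧
  ∃ M : ℝ, ∀ w : X, ‖w‖ ≤ 1 → ∀ z ∈ H w, ‖z‖ ≤ M
set_option maxHeartbeats 1600000 in
theorem stmt8 (H : ℝ → Set ℝ) (hH : Prefan H) :
    PseudoStrictDiff (fun x : ℝ => Iic (-|x|) ∪ Ici |x|) H 0 0 ↔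
    ∀ p : ℝ, Icc (-|p|) |p| ⊆ H p := by
  obtain ⟨hval, ⟨hpos1, hpos2⟩, M, hM⟩ := hH
  constructor
  · intro hdiff p q hq
    by_cases hp : p = 0
    · subst hp
      simp only [abs_zero, neg_zero, Icc_self, mem_singleton_iff] at hq
      subst hq
      have hcl : IsClosed (H 0) := (hval 0).2.2.isClosed
      rw [← hcl.closure_eq, Metric.mem_closure_iff]
      intro ε hε
      obtain ⟨z, hz⟩ := (hval 0).1
      have hc : (0:ℝ) < ε / (2 * (|z| + 1)) := by positivity
      refine ⟨(ε / (2 * (|z| + 1))) • z, hpos1 _ hc z hz, ?_⟩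
      rw [dist_eq_norm, zero_sub, norm_neg, smul_eq_mul, Real.norm_eq_abs, abs_mul,
        abs_of_pos hc]
      rw [div_mul_eq_mul_div, div_lt_iff₀ (by positivity)]
      nlinarith [abs_nonneg z]
    · have hP : 0 < |p| := abs_pos.mpr hp
      set K := max M 0 with hK_def
      have hK0 : 0 ≤ K := le_max_right _ _
      have hbd : ∀ z ∈ H p, |z| ≤ K * |p| := by
        intro z hz
        have h1 : ‖p / |p|‖ ≤ 1 := by
          rw [Real.norm_eq_abs, abs_div, abs_abs, div_self (ne_of_gt hP)]
        have h2 : H p = |p| • H (p / |p|) := by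
          have h3 := hpos2 |p| hP (p / |p|)
          rw [smul_eq_mul, mul_div_cancel₀ _ (ne_of_gt hP)] at h3
          exact h3
        rw [h2] at hz
        obtain ⟨z₀, hz₀, rfl⟩ := hz
        have h4 : |z₀| ≤ K := le_trans (by simpa [Real.norm_eq_abs] using hM _ h1 z₀ hz₀)
          (le_max_left _ _)
        simp only [smul_eq_mul, abs_mul, abs_abs]
        nlinarith [abs_nonneg z₀]
      have key : ∀ δ : ℝ, 0 < δ → ∀ r ∈ Icc (-((1-δ)*|p|)) ((1-δ)*|p|), r ∈ H p := by
        intro δ hδ r hr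
        obtain ⟨U, hU, V, hV, hmain⟩ := hdiff δ hδ
        obtain ⟨ε₁, hε₁, hUb⟩ := Metric.mem_nhds_iff.mp hU
        obtain ⟨ε₂, hε₂, hVb⟩ := Metric.mem_nhds_iff.mp hV
        set A := min ε₁ ε₂ with hA_def
        have hA : 0 < A := lt_min hε₁ hε₂
        set t := A / (4 * |p|) with ht_def
        have ht : 0 < t := by positivity
        set s := t / (1 + K + δ) with hs_def
        have hs : 0 < s := by positivity
        have hseq : s * (1 + K + δ) = t := by
          rw [hs_def]; field_simp
        have hst : s ≤ t := by nlinarith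
        have htA : t * |p| = A / 4 := by
          rw [ht_def]; field_simp
        have hxU : -(t*p) ∈ U := by
          apply hUb
          rw [mem_ball_zero_iff, Real.norm_eq_abs, abs_neg, abs_mul, abs_of_pos ht]
          calc t * |p| = A/4 := htA
            _ < A := by linarith
            _ ≤ ε₁ := min_le_left _ _
        have hx'U : -((t+s)*p) ∈ U := by
          apply hUb
          rw [mem_ball_zero_iff, Real.norm_eq_abs, abs_neg, abs_mul,
            abs_of_pos (by linarith : (0:ℝ) < t + s)]
          have h5 : (t+s)*|p| ≤ 2*(t*|p|) := by nlinarith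
          calc (t+s)*|p| ≤ 2*(A/4) := by rw [← htA]; exact h5
            _ < A := by linarith
            _ ≤ ε₁ := min_le_left _ _
        have hyV : ∀ c : ℝ, |c| = t * |p| → c ∈ V := by
          intro c hc
          apply hVb
          rw [mem_ball_zero_iff, Real.norm_eq_abs, hc]
          calc t*|p| = A/4 := htA
            _ < A := by linarith
            _ ≤ ε₂ := min_le_right _ _
        have habs_x : |(-(t*p))| = t * |p| := by
          rw [abs_neg, abs_mul, abs_of_pos ht]
        have habs_x' : |(-((t+s)*p))| = (t+s) * |p| := by
          rw [abs_neg, abs_mul, abs_of_pos (by linarith : (0:ℝ) < t + s)]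
        have hdx : (-(t*p)) - (-((t+s)*p)) = s * p := by ring
        have hHs : ∀ h, h ∈ H (s * p) → ∃ h₀ ∈ H p, h = s * h₀ := by
          intro h hh
          have h6 := hpos2 s hs p
          rw [smul_eq_mul] at h6
          rw [h6, Set.mem_smul_set] at hh
          obtain ⟨h₀, hh₀, hrfl⟩ := hh
          exact ⟨h₀, hh₀, by rw [← hrfl, smul_eq_mul]⟩
        have hnsp : ‖s * p‖ = s * |p| := by
          rw [Real.norm_eq_abs, abs_mul, abs_of_pos hs]
        -- element a ≤ -(1-δ)|p|
        have hgetA : ∃ a ∈ H p, a ≤ -((1-δ)*|p|) := by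
          obtain ⟨y', hy', h, hh, hnrm⟩ := hmain (-(t*p)) hxU (-((t+s)*p)) hx'U (t*|p|)
            ⟨Or.inr (mem_Ici.mpr habs_x.le), hyV _ (abs_of_nonneg (by positivity))⟩
          rw [hdx] at hh hnrm
          obtain ⟨a, haH, rfl⟩ := hHs h hh
          rw [hnsp, Real.norm_eq_abs, abs_le] at hnrm
          have hba := abs_le.mp (hbd a haH)
          rcases hy' with hy' | hy'
          · exfalso
            rw [mem_Iic, habs_x'] at hy'
            have hseqP : s*(1+K+δ)*|p| = t*|p| := by rw [hseq]
            nlinarith [mul_pos hs hP, mul_pos ht hP,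
              mul_le_mul_of_nonneg_left hba.2 hs.le, hnrm.2]
          · rw [mem_Ici, habs_x'] at hy'
            refine ⟨a, haH, ?_⟩
            have h7 : s * a ≤ s * (-((1-δ)*|p|)) := by nlinarith [hnrm.1]
            exact (mul_le_mul_iff_right₀ hs).mp h7
        -- element b ≥ (1-δ)|p|
        have hgetB : ∃ b ∈ H p, (1-δ)*|p| ≤ b := by
          obtain ⟨y', hy', h, hh, hnrm⟩ := hmain (-(t*p)) hxU (-((t+s)*p)) hx'U (-(t*|p|))
            ⟨Or.inl (mem_Iic.mpr (by rw [habs_x])), hyV _ (by rw [abs_neg, abs_of_nonneg (by positivity)])⟩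
          rw [hdx] at hh hnrm
          obtain ⟨b, hbH, rfl⟩ := hHs h hh
          rw [hnsp, Real.norm_eq_abs, abs_le] at hnrm
          have hbb := abs_le.mp (hbd b hbH)
          rcases hy' with hy' | hy'
          · rw [mem_Iic, habs_x'] at hy'
            refine ⟨b, hbH, ?_⟩
            have h7 : s * ((1-δ)*|p|) ≤ s * b := by nlinarith [hnrm.2]
            exact (mul_le_mul_iff_right₀ hs).mp h7
          · exfalso
            rw [mem_Ici, habs_x'] at hy'
            have hseqP : s*(1+K+δ)*|p| = t*|p| := by rw [hseq]
            nlinarith [mul_pos hs hP, mul_pos ht hP,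
              mul_le_mul_of_nonneg_left hbb.1 hs.le, hnrm.1]
        obtain ⟨a, haH, ha⟩ := hgetA
        obtain ⟨b, hbH, hb⟩ := hgetB
        exact ((hval p).2.1.ordConnected.out haH hbH)
          ⟨le_trans ha hr.1, le_trans hr.2 hb⟩
      have hcl : IsClosed (H p) := (hval p).2.2.isClosed
      rw [← hcl.closure_eq, Metric.mem_closure_iff]
      intro ε hε
      set δ := min (ε / (|q| + 1)) (1/2) with hδ_def
      have hδ : 0 < δ := lt_min (by positivity) (by norm_num)
      have hδ1 : δ ≤ 1/2 := min_le_right _ _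
      have h1δ : (0:ℝ) ≤ 1 - δ := by linarith
      refine ⟨(1 - δ) * q, key δ hδ _ ⟨?_, ?_⟩, ?_⟩
      · nlinarith [mul_le_mul_of_nonneg_left hq.1 h1δ]
      · nlinarith [mul_le_mul_of_nonneg_left hq.2 h1δ]
      · rw [Real.dist_eq, show q - (1-δ)*q = δ * q by ring, abs_mul, abs_of_pos hδ]
        have h8 : δ ≤ ε / (|q| + 1) := min_le_left _ _
        have h9 : δ * (|q| + 1) ≤ ε := by
          rw [← div_mul_cancel₀ ε (show |q| + 1 ≠ 0 by positivity)]
          exact mul_le_mul_of_nonneg_right h8 (by positivity)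
        nlinarith [abs_nonneg q]
  · intro hsub δ hδ
    refine ⟨univ, Filter.univ_mem, univ, Filter.univ_mem, fun x _ x' _ y hy => ?_⟩
    obtain ⟨hyS, -⟩ := hy
    rcases hyS with hy1 | hy1
    · refine ⟨min y (-|x'|), Or.inl (mem_Iic.mpr (min_le_right _ _)), ?_⟩
      have hb : |y - min y (-|x'|)| ≤ |x - x'| := by
        rcases le_total y (-|x'|) with h | h
        · rw [min_eq_left h]; simpa using abs_nonneg (x - x')
        · rw [min_eq_right h]
          have h2 : 0 ≤ y + |x'| := by linarith
          rw [show y - -|x'| = y + |x'| by ring, abs_of_nonneg h2]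
          have h3 : |x'| - |x| ≤ |x' - x| := abs_sub_abs_le_abs_sub x' x
          rw [abs_sub_comm] at h3
          have h4 : y ≤ -|x| := hy1
          linarith
      refine ⟨y - min y (-|x'|), hsub _ (mem_Icc.mpr (abs_le.mp hb)), ?_⟩
      simp only [sub_self, norm_zero]
      positivity
    · refine ⟨max y |x'|, Or.inr (mem_Ici.mpr (le_max_right _ _)), ?_⟩
      have hb : |y - max y (|x'|)| ≤ |x - x'| := by
        rcases le_total |x'| y with h | h
        · rw [max_eq_left h]; simpa using abs_nonneg (x - x')
        · rw [max_eq_right h]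
          have h2 : y - |x'| ≤ 0 := by linarith
          rw [abs_of_nonpos h2]
          have h3 : |x'| - |x| ≤ |x' - x| := abs_sub_abs_le_abs_sub x' x
          rw [abs_sub_comm] at h3
          have h4 : |x| ≤ y := hy1
          linarith
      refine ⟨y - max y |x'|, hsub _ (mem_Icc.mpr (abs_le.mp hb)), ?_⟩
      simp only [sub_self, norm_zero]
      positivity
end

section
/- Let $S_2:\mathbb{R}\rightrightarrows\mathbb{R}$ be defined by $S_2(x)=\{x,-x\}$, and let $H:\mathbb{R}\rightrightarrows\mathbb{R}$ be a prefan. Then $S_2$ is pseudo strictly $H$-differentiable at $(0,0)$ if and only if $[-1,1]\subset H(1)$ and $[-1,1]\subset H(-1)$. -/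
open Metric Set Pointwise

theorem stmt9 (H : ℝ → Set ℝ) (hH : Prefan H) :
    PseudoStrictDiff (fun x : ℝ => {x, -x}) H 0 0 ↔
    (Icc (-1 : ℝ) 1 ⊆ H 1 ∧ Icc (-1 : ℝ) 1 ⊆ H (-1)) := by

  obtain ⟨hvals, ⟨hpos0, hscale⟩, M, hM⟩ := hH
  have h00 : (0:ℝ) ∈ H 0 := by
    obtain ⟨y0, hy0⟩ := (hvals 0).1
    rcases eq_or_ne y0 0 with rfl | hne
    · exact hy0
    · exfalso
      have hy0pos : 0 < |y0| := abs_pos.2 hne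
      set c : ℝ := (|M| + 1) / |y0| with hc
      have hcpos : 0 < c := by positivity
      have hmem := hpos0 c hcpos y0 hy0
      have hb := hM 0 (by simp) _ hmem
      have hnorm : ‖c • y0‖ = |M| + 1 := by
        rw [norm_smul, Real.norm_eq_abs, Real.norm_eq_abs, abs_of_pos hcpos, hc]
        field_simp
      rw [hnorm] at hb
      have := le_abs_self M
      linarith
  have hsc : ∀ s : ℝ, 0 < s → ∀ σ : ℝ, H (s * σ) = s • H σ := by
    intro s hs σ
    simpa [smul_eq_mul] using hscale s hs σ
  constructor
  · intro hPSD
    have approx : ∀ σ : ℝ, σ = 1 ∨ σ = -1 → ∀ δ : ℝ, 0 < δ →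
        (∃ a ∈ H σ, |1 - a| ≤ δ) ∧ (∃ b ∈ H σ, |(-1) - b| ≤ δ) := by
      intro σ hσ δ hδ
      obtain ⟨U, hU, V, hV, hprop⟩ := hPSD δ hδ
      obtain ⟨r, hr, hball⟩ := Metric.mem_nhds_iff.1 (Filter.inter_mem hU hV)
      set s : ℝ := r / 2 with hs_def
      have hs : 0 < s := by positivity
      have habs : |σ| = 1 := by rcases hσ with rfl | rfl <;> norm_num
      have hmem : ∀ z : ℝ, |z| = s → z ∈ U ∩ V := by
        intro z hz
        apply hball
        simp only [Metric.mem_ball, Real.dist_eq, sub_zero, hz]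
        linarith
      have hx : σ * s ∈ U ∩ V := hmem _ (by rw [abs_mul, habs, one_mul, abs_of_pos hs])
      have hnx : -(σ * s) ∈ U ∩ V := hmem _ (by rw [abs_neg, abs_mul, habs, one_mul, abs_of_pos hs])
      have h0U : (0:ℝ) ∈ U := (hball (Metric.mem_ball_self hr)).1
      have main : ∀ y : ℝ, y ∈ ({σ * s, -(σ * s)} : Set ℝ) → y ∈ V →
          ∃ a ∈ H σ, |y / s - a| ≤ δ := by
        intro y hy hyV
        obtain ⟨y', hy', henl⟩ := hprop (σ * s) hx.1 0 h0U y ⟨hy, hyV⟩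
        have hy'0 : y' = 0 := by simpa using hy'
        subst hy'0
        simp only [enl, Set.mem_setOf_eq, sub_zero] at henl
        obtain ⟨h, hh, hle⟩ := henl
        rw [mul_comm σ s, hsc s hs σ] at hh
        obtain ⟨a, ha, rfl⟩ := hh
        refine ⟨a, ha, ?_⟩
        have hnorms : ‖σ * s‖ = s := by
          rw [Real.norm_eq_abs, abs_mul, habs, one_mul, abs_of_pos hs]
        simp only [smul_eq_mul] at hle
        rw [hnorms, Real.norm_eq_abs] at hle
        have heq : y / s - a = (y - s * a) / s := by field_simp
        rw [heq, abs_div, abs_of_pos hs, div_le_iff₀ hs]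
        linarith [hle]
      obtain ⟨a, ha, hla⟩ := main (σ * s) (Set.mem_insert _ _) (hmem _ (by rw [abs_mul, habs, one_mul, abs_of_pos hs])).2
      obtain ⟨b, hb, hlb⟩ := main (-(σ * s)) (Set.mem_insert_iff.2 (Or.inr rfl)) hnx.2
      rw [mul_div_assoc, div_self hs.ne', mul_one] at hla
      rw [neg_div, mul_div_assoc, div_self hs.ne', mul_one] at hlb
      rcases hσ with rfl | rfl
      · exact ⟨⟨a, ha, hla⟩, ⟨b, hb, hlb⟩⟩
      · refine ⟨⟨b, hb, by simpa using hlb⟩, ⟨a, ha, hla⟩⟩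
    have incl : ∀ σ : ℝ, σ = 1 ∨ σ = -1 → Icc (-1:ℝ) 1 ⊆ H σ := by
      intro σ hσ t ht
      have hclosed : IsClosed (H σ) := (hvals σ).2.2.isClosed
      rw [← hclosed.closure_eq, Metric.mem_closure_iff]
      intro ε hε
      obtain ⟨⟨a, ha, hla⟩, ⟨b, hb, hlb⟩⟩ := approx σ hσ (ε/2) (by positivity)
      obtain ⟨ht1, ht2⟩ := ht
      rw [abs_le] at hla hlb
      rcases le_or_gt t b with hcase | hcase
      · refine ⟨b, hb, ?_⟩
        rw [Real.dist_eq, abs_lt]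
        constructor <;> linarith
      rcases le_or_gt a t with hcase' | hcase'
      · refine ⟨a, ha, ?_⟩
        rw [Real.dist_eq, abs_lt]
        constructor <;> linarith
      · refine ⟨t, ?_, by simpa using hε⟩
        have hba : b ≤ a := by linarith
        have hseg := (hvals σ).2.1.segment_subset hb ha
        rw [segment_eq_Icc hba] at hseg
        exact hseg ⟨hcase.le, hcase'.le⟩
    exact ⟨incl 1 (Or.inl rfl), incl (-1) (Or.inr rfl)⟩
  · rintro ⟨h1, h2⟩
    have hkey : ∀ w : ℝ, w ∈ H w ∧ -w ∈ H w := by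
      intro w
      rcases lt_trichotomy w 0 with hw | hw | hw
      · have heq : H w = (-w) • H (-1) := by
          have := hsc (-w) (by linarith) (-1)
          rw [show (-w) * (-1) = w by ring] at this
          exact this
        rw [heq]
        constructor
        · exact ⟨-1, h2 (by norm_num), by simp only [smul_eq_mul]; ring⟩
        · exact ⟨1, h2 (by norm_num), by simp only [smul_eq_mul]; ring⟩
      · subst hw
        refine ⟨h00, ?_⟩
        rw [neg_zero]
        exact h00
      · have heq : H w = w • H 1 := by
          have := hsc w hw 1
          rw [mul_one] at this
          exact this
        rw [heq]
        constructor
        · exact ⟨1, h1 (by norm_num), by simp only [smul_eq_mul]; ring⟩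
        · exact ⟨-1, h1 (by norm_num), by simp only [smul_eq_mul]; ring⟩
    intro δ hδ
    refine ⟨Set.univ, Filter.univ_mem, Set.univ, Filter.univ_mem, ?_⟩
    rintro x - x' - y ⟨hy, -⟩
    simp only [Set.mem_insert_iff, Set.mem_singleton_iff] at hy
    rcases hy with hy | hy <;> rw [hy]
    · refine ⟨x', Set.mem_insert _ _, ?_⟩
      simp only [enl, Set.mem_setOf_eq]
      refine ⟨x - x', (hkey (x - x')).1, ?_⟩
      simp only [sub_self, norm_zero]
      positivity
    · refine ⟨-x', Set.mem_insert_iff.2 (Or.inr rfl), ?_⟩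
      simp only [enl, Set.mem_setOf_eq]
      refine ⟨-(x - x'), (hkey (x - x')).2, ?_⟩
      rw [show -x - -x' - -(x - x') = 0 by ring, norm_zero]
      positivity
end

section
/- Define $S_3:\mathbb{R}\rightrightarrows\mathbb{R}$ by $S_3(x)=\{x,-x\}$ for $x\le 0$ and $S_3(x)=[-x,x]$ for $x\ge 0$, and define the (non-convex-valued) positively homogeneous map $H'(x)=\{x,-x\}$. Then $S_3$ is not pseudo strictly $H'$-differentiable at $(0,0)$, while the map $S_1(x)=(-\infty,-|x|]\cup[|x|,\infty)$ is pseudo strictly $H'$-differentiable at $(0,0)$. -/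
open Metric Set Pointwise

/-- `S₃(x) = {x, -x}` for `x ≤ 0` and `[-x, x]` for `x ≥ 0`. -/
noncomputable def S3 : ℝ → Set ℝ := fun x => if x ≤ 0 then {x, -x} else Icc (-x) x

/-- `H'(x) = {x, -x}`. -/
def H' : ℝ → Set ℝ := fun x => {x, -x}

theorem stmt10 :
    ¬ PseudoStrictDiff S3 H' 0 0 ∧
    PseudoStrictDiff (fun x : ℝ => Iic (-|x|) ∪ Ici |x|) H' 0 0 := by
  constructor
  · intro h
    obtain ⟨U, hU, V, hV, hmain⟩ := h (1/4) (by norm_num)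
    obtain ⟨ε, hε, hball⟩ := Metric.mem_nhds_iff.mp hU
    set t := ε/2 with ht
    have htpos : 0 < t := by positivity
    have htU : t ∈ U := hball (by
      simp [Metric.mem_ball, Real.dist_eq, abs_of_pos htpos]; linarith)
    have htU' : -t ∈ U := hball (by
      simp [Metric.mem_ball, Real.dist_eq, abs_of_pos htpos]; linarith)
    have h0V : (0:ℝ) ∈ V := mem_of_mem_nhds hV
    have h0S : (0:ℝ) ∈ S3 t := by
      simp [S3, not_le.mpr htpos, htpos.le]
    obtain ⟨y', hy', hmem⟩ := hmain t htU (-t) htU' 0 ⟨h0S, h0V⟩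
    have hy'cases : y' = -t ∨ y' = t := by
      simpa [S3, neg_nonpos.mpr htpos.le] using hy'
    obtain ⟨hh, hhmem, hle⟩ := hmem
    have hh' : hh = t - -t ∨ hh = -(t - -t) := hhmem
    have h2t : ‖t - -t‖ = 2*t := by
      rw [Real.norm_eq_abs, abs_of_pos (by linarith : (0:ℝ) < t - -t)]; ring
    rw [h2t] at hle
    rcases hy'cases with h1 | h1 <;> rcases hh' with h2 | h2 <;>
      rw [h1, h2, Real.norm_eq_abs, abs_le] at hle <;>
      obtain ⟨hle1, hle2⟩ := hle <;> linarith
  · intro δ hδ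
    refine ⟨univ, Filter.univ_mem, univ, Filter.univ_mem, ?_⟩
    rintro x - x' - y ⟨hy, -⟩
    have hδn : 0 ≤ δ * ‖x - x'‖ := mul_nonneg hδ.le (norm_nonneg _)
    rcases hy with hy | hy
    · rw [mem_Iic] at hy
      rcases le_or_gt 0 x' with hx' | hx'
      · refine ⟨y + x - x', Or.inl (mem_Iic.mpr ?_), ⟨-(x - x'), Set.mem_insert_of_mem _ rfl, ?_⟩⟩
        · have := le_abs_self x
          rw [abs_of_nonneg hx']; linarith
        · have : y - (y + x - x') - -(x - x') = 0 := by ring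
          rw [this, norm_zero]; exact hδn
      · refine ⟨y - x + x', Or.inl (mem_Iic.mpr ?_), ⟨x - x', Set.mem_insert _ _, ?_⟩⟩
        · have := neg_abs_le x
          rw [abs_of_neg hx']; linarith
        · have : y - (y - x + x') - (x - x') = 0 := by ring
          rw [this, norm_zero]; exact hδn
    · rw [mem_Ici] at hy
      rcases le_or_gt 0 x' with hx' | hx'
      · refine ⟨y - x + x', Or.inr (mem_Ici.mpr ?_), ⟨x - x', Set.mem_insert _ _, ?_⟩⟩
        · have := le_abs_self x
          rw [abs_of_nonneg hx']; linarith
        · have : y - (y - x + x') - (x - x') = 0 := by ring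
          rw [this, norm_zero]; exact hδn
      · refine ⟨y + x - x', Or.inr (mem_Ici.mpr ?_), ⟨-(x - x'), Set.mem_insert_of_mem _ rfl, ?_⟩⟩
        · have := neg_abs_le x
          rw [abs_of_neg hx']; linarith
        · have : y - (y + x - x') - -(x - x') = 0 := by ring
          rw [this, norm_zero]; exact hδn
end

section
/- Let $S:\mathbb{R}^n\rightrightarrows\mathbb{R}^m$ be closed-valued and let $\{C_i\}_{i\in I}$ be a family of closed subsets of $\mathbb{R}^m$. Suppose that for every set $D$ which is a set-limit of $S(x_k)$ along some sequence $x_k\to\bar x$ (i.e., $D\in\limsup$ of $S$ in the sense of convergence of sets), there exists $i\in I$ with $C_i\subset D$. Then $S$ is $\{C_i\}_{i\in I}$-inner semicontinuous at $\bar x$: for all $\rho>0$ and $\epsilon>0$ there is a neighborhood $V\ni\bar x$ such that for each $x\in V$, some $i\in I$ satisfies $C_i\cap\rho\mathbb{B}\subset S(x)+\epsilon\mathbb{B}$. -/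
open Metric Set Filter Topology Pointwise

/-- Painlevé–Kuratowski convergence of a sequence of sets `A k` to `D`. -/
def PKConv {E : Type*} [NormedAddCommGroup E] (A : ℕ → Set E) (D : Set E) : Prop :=
  (∀ y ∈ D, ∃ yk : ℕ → E, (∀ k, yk k ∈ A k) ∧ Tendsto yk atTop (nhds y)) ∧
  (∀ (y : E) (φ : ℕ → ℕ), StrictMono φ → ∀ yk : ℕ → E, (∀ k, yk k ∈ A (φ k)) →
    Tendsto yk atTop (nhds y) → y ∈ D)

private lemma infDist_lip {E : Type*} [NormedAddCommGroup E] (s : Set E) (a b : E) :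
    infDist a s ≤ infDist b s + dist a b := infDist_le_infDist_add_dist

/-- Selection theorem: from a sequence of nonempty uniformly "reachable" sets in `ℝ^m`,
extract a subsequence that Painlevé–Kuratowski converges to the set of points whose
distance to the sets tends to zero. -/
private lemma pk_extract {m : ℕ} (B : ℕ → Set (Fin m → ℝ)) (M : ℝ)
    (hne : ∀ k, (B k).Nonempty) (hM : ∀ k, infDist 0 (B k) ≤ M) :
    ∃ ψ : ℕ → ℕ, StrictMono ψ ∧
      PKConv (fun k => B (ψ k))
        {y | Tendsto (fun k => infDist y (B (ψ k))) atTop (nhds 0)} := by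
  classical
  set q : ℕ → (Fin m → ℝ) := TopologicalSpace.denseSeq (Fin m → ℝ) with hqdef
  have hq : DenseRange q := TopologicalSpace.denseRange_denseSeq (Fin m → ℝ)
  set K : Set (ℕ → ℝ) := Set.univ.pi (fun j => Icc (0:ℝ) (M + dist (q j) 0)) with hKdef
  have hK : IsCompact K := isCompact_univ_pi fun j => isCompact_Icc
  have hmem : ∀ k, (fun j => infDist (q j) (B k)) ∈ K := by
    intro k
    rw [hKdef, Set.mem_univ_pi]
    intro j
    refine ⟨infDist_nonneg, ?_⟩
    calc infDist (q j) (B k) ≤ infDist 0 (B k) + dist (q j) 0 := infDist_le_infDist_add_dist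
    _ ≤ M + dist (q j) 0 := by linarith [hM k]
  obtain ⟨L, -, ψ, hψ, hL⟩ := hK.tendsto_subseq hmem
  have hLj : ∀ j, Tendsto (fun k => infDist (q j) (B (ψ k))) atTop (nhds (L j)) := by
    intro j
    exact (tendsto_pi_nhds.1 hL j)
  -- convergence at every point by density
  have hcau : ∀ y : Fin m → ℝ, ∃ l, Tendsto (fun k => infDist y (B (ψ k))) atTop (nhds l) := by
    intro y
    refine cauchySeq_tendsto_of_complete ?_
    rw [Metric.cauchySeq_iff]
    intro δ hδ
    obtain ⟨j, hj⟩ := hq.exists_dist_lt y (show (0:ℝ) < δ/4 by linarith)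
    obtain ⟨N, hN⟩ := Metric.cauchySeq_iff.1 (hLj j).cauchySeq (δ/4) (by linarith)
    refine ⟨N, fun a ha b hb => ?_⟩
    have l1 : dist (infDist y (B (ψ a))) (infDist (q j) (B (ψ a))) ≤ dist y (q j) := by
      simpa using (lipschitz_infDist_pt (B (ψ a))).dist_le_mul y (q j)
    have l2 : dist (infDist y (B (ψ b))) (infDist (q j) (B (ψ b))) ≤ dist y (q j) := by
      simpa using (lipschitz_infDist_pt (B (ψ b))).dist_le_mul y (q j)
    have l3 := hN a ha b hb
    calc dist (infDist y (B (ψ a))) (infDist y (B (ψ b)))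
        ≤ dist (infDist y (B (ψ a))) (infDist (q j) (B (ψ a)))
          + dist (infDist (q j) (B (ψ a))) (infDist (q j) (B (ψ b)))
          + dist (infDist (q j) (B (ψ b))) (infDist y (B (ψ b))) := dist_triangle4 _ _ _ _
      _ < δ := by rw [dist_comm (infDist (q j) (B (ψ b)))]; linarith
  refine ⟨ψ, hψ, ?_, ?_⟩
  · -- inner part
    intro y hy
    have hy' : Tendsto (fun k => infDist y (B (ψ k))) atTop (nhds 0) := hy
    have sel : ∀ k : ℕ, ∃ z ∈ B (ψ k), dist y z < infDist y (B (ψ k)) + 1/(k+1) := by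
      intro k
      refine (infDist_lt_iff (hne (ψ k))).1 ?_
      have : (0:ℝ) < 1/(k+1) := by positivity
      linarith
    choose yk hyk1 hyk2 using sel
    refine ⟨yk, hyk1, ?_⟩
    rw [tendsto_iff_dist_tendsto_zero]
    refine squeeze_zero (g := fun k => infDist y (B (ψ k)) + 1/(k+1))
      (fun k => dist_nonneg) (fun k => ?_) ?_
    · exact le_of_lt (by rw [dist_comm]; exact hyk2 k)
    · have := hy'.add tendsto_one_div_add_atTop_nhds_zero_nat
      simpa using this
  · -- outer part
    intro y φ' hφ' yk hyk hlim
    obtain ⟨l, hl⟩ := hcau y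
    have hsub : Tendsto (fun k => infDist y (B (ψ (φ' k)))) atTop (nhds l) :=
      hl.comp hφ'.tendsto_atTop
    have hsub0 : Tendsto (fun k => infDist y (B (ψ (φ' k)))) atTop (nhds 0) := by
      refine squeeze_zero (g := fun k => dist (yk k) y)
        (fun k => infDist_nonneg) (fun k => ?_) ?_
      · show infDist y (B (ψ (φ' k))) ≤ dist (yk k) y
        rw [dist_comm]; exact infDist_le_dist_of_mem (hyk k)
      · exact tendsto_iff_dist_tendsto_zero.1 hlim
    have : l = 0 := tendsto_nhds_unique hsub hsub0
    show Tendsto (fun k => infDist y (B (ψ k))) atTop (nhds 0)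
    rwa [this] at hl

theorem stmt14 {n m : ℕ} {I : Type*}
    (S : (Fin n → ℝ) → Set (Fin m → ℝ)) (xb : Fin n → ℝ)
    (C : I → Set (Fin m → ℝ))
    (hSclosed : ∀ x, IsClosed (S x)) (hCclosed : ∀ i, IsClosed (C i))
    (hyp : ∀ (D : Set (Fin m → ℝ)) (xk : ℕ → Fin n → ℝ),
      Tendsto xk atTop (nhds xb) → PKConv (fun k => S (xk k)) D → ∃ i, C i ⊆ D) :
    ∀ ρ : ℝ, 0 < ρ → ∀ ε : ℝ, 0 < ε → ∃ V ∈ nhds xb, ∀ x ∈ V, ∃ i,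
      C i ∩ Metric.closedBall 0 ρ ⊆ S x + Metric.closedBall 0 ε := by
  classical
  intro ρ hρ ε hε
  by_contra hcon
  push_neg at hcon
  -- choose a sequence of counterexamples
  have hsel : ∀ k : ℕ, ∃ x, dist x xb < 1/(k+1) ∧
      ∀ i, ¬ (C i ∩ Metric.closedBall 0 ρ ⊆ S x + Metric.closedBall 0 ε) := by
    intro k
    have hpos : (0:ℝ) < 1/(k+1) := by positivity
    obtain ⟨x, hxV, hx⟩ := hcon (Metric.ball xb (1/(k+1))) (Metric.ball_mem_nhds xb hpos)
    exact ⟨x, by simpa [Metric.mem_ball] using hxV, hx⟩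
  choose x hx1 hx2 using hsel
  have htx : Tendsto x atTop (nhds xb) := by
    rw [tendsto_iff_dist_tendsto_zero]
    refine squeeze_zero (fun k => dist_nonneg) (fun k => le_of_lt (hx1 k)) ?_
    exact tendsto_one_div_add_atTop_nhds_zero_nat
  -- failure of inclusion gives far points
  have hfar : ∀ (xp : Fin n → ℝ) (z : Fin m → ℝ),
      z ∉ S xp + Metric.closedBall 0 ε → ∀ s ∈ S xp, ε < dist z s := by
    intro xp z hz s hs
    by_contra hle
    push_neg at hle
    refine hz ⟨s, hs, z - s, ?_, show s + (z - s) = z by abel⟩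
    rw [mem_closedBall_zero_iff]
    rwa [dist_eq_norm] at hle
  have hzsel : ∀ (k : ℕ) (i : I), ∃ z, z ∈ C i ∩ Metric.closedBall 0 ρ ∧
      z ∉ S (x k) + Metric.closedBall 0 ε := by
    intro k i
    have := hx2 k i
    rw [Set.not_subset] at this
    obtain ⟨z, hz1, hz2⟩ := this
    exact ⟨z, hz1, hz2⟩
  by_cases hcase : ∃ M : ℝ, ∃ᶠ k in atTop, (S (x k)).Nonempty ∧ infDist 0 (S (x k)) ≤ M
  · obtain ⟨M, hfreq⟩ := hcase
    obtain ⟨φ, hφ, hφP⟩ := extraction_of_frequently_atTop hfreq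
    obtain ⟨ψ, hψ, hPK⟩ := pk_extract (fun k => S (x (φ k))) M
      (fun k => (hφP k).1) (fun k => (hφP k).2)
    have htx' : Tendsto (fun k => x (φ (ψ k))) atTop (nhds xb) :=
      htx.comp ((hφ.comp hψ).tendsto_atTop)
    obtain ⟨i, hCi⟩ := hyp _ (fun k => x (φ (ψ k))) htx' hPK
    -- far points in C i
    have hz : ∀ k : ℕ, ∃ z, z ∈ C i ∩ Metric.closedBall 0 ρ ∧
        z ∉ S (x (φ (ψ k))) + Metric.closedBall 0 ε := fun k => hzsel (φ (ψ k)) i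
    choose z hz1 hz2 using hz
    obtain ⟨w, -, ψ', hψ', hw⟩ :=
      (isCompact_closedBall (0 : Fin m → ℝ) ρ).tendsto_subseq (fun k => (hz1 k).2)
    have hwC : w ∈ C i :=
      (hCclosed i).mem_of_tendsto hw (Filter.Eventually.of_forall fun k => (hz1 (ψ' k)).1)
    have hwD : Tendsto (fun k => infDist w (S (x (φ (ψ k))))) atTop (nhds 0) := hCi hwC
    have hwD' : Tendsto (fun k => infDist w (S (x (φ (ψ (ψ' k)))))) atTop (nhds 0) :=
      hwD.comp hψ'.tendsto_atTop
    -- lower bound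
    have hlow : ∀ k, ε - dist w (z (ψ' k)) ≤ infDist w (S (x (φ (ψ (ψ' k))))) := by
      intro k
      have hεle : ε ≤ infDist (z (ψ' k)) (S (x (φ (ψ (ψ' k))))) := by
        by_contra hlt
        push_neg at hlt
        obtain ⟨s, hs, hds⟩ := (infDist_lt_iff (hφP (ψ (ψ' k))).1).1 hlt
        exact absurd hds (not_lt.2 (le_of_lt (hfar _ _ (hz2 (ψ' k)) s hs)))
      have := infDist_le_infDist_add_dist
        (x := z (ψ' k)) (y := w) (s := S (x (φ (ψ (ψ' k)))))
      rw [dist_comm] at this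
      linarith
    have hrhs : Tendsto (fun k => ε - dist w (z (ψ' k))) atTop (nhds ε) := by
      have hd : Tendsto (fun k => dist w (z (ψ' k))) atTop (nhds 0) := by
        have := tendsto_iff_dist_tendsto_zero.1 hw
        simpa [dist_comm] using this
      simpa using (tendsto_const_nhds (x := ε)).sub hd
    have : ε ≤ 0 := le_of_tendsto_of_tendsto' hrhs hwD' hlow
    linarith
  · -- S (x k) eventually empty or far away: PK limit is ∅
    push_neg at hcase
    have hPK : PKConv (fun k => S (x k)) (∅ : Set (Fin m → ℝ)) := by
      constructor
      · intro y hy; exact absurd hy (Set.notMem_empty y)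
      · intro y φ' hφ' yk hyk hlim
        exfalso
        obtain ⟨N, hN⟩ := (Metric.tendsto_atTop.1 hlim) 1 one_pos
        have key : ∃ᶠ k in atTop, (S (x k)).Nonempty ∧
            infDist 0 (S (x k)) ≤ dist 0 y + 1 := by
          rw [Filter.frequently_atTop]
          intro a
          refine ⟨φ' (max a N), le_trans (le_max_left a N) (hφ'.le_apply), ?_, ?_⟩
          · exact ⟨yk (max a N), hyk (max a N)⟩
          · have h1 : infDist 0 (S (x (φ' (max a N)))) ≤ dist 0 (yk (max a N)) :=
              infDist_le_dist_of_mem (hyk (max a N))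
            have h2 : dist (yk (max a N)) y < 1 := hN (max a N) (le_max_right a N)
            have h3 : dist 0 (yk (max a N)) ≤ dist 0 y + dist y (yk (max a N)) :=
              dist_triangle _ _ _
            rw [dist_comm y] at h3
            linarith
        exact absurd key (by simpa using hcase (dist 0 y + 1))
    obtain ⟨i, hCi⟩ := hyp ∅ x htx hPK
    obtain ⟨z, hz1, -⟩ := hzsel 0 i
    exact absurd (hCi hz1.1) (Set.notMem_empty z)
end

section
/- Let $f_2:\mathbb{R}^2\to\mathbb{R}$ be $f_2(x)=\|x\|_2$, and let $H:\mathbb{R}^2\rightrightarrows\mathbb{R}$ be a prefan. Then $f_2$ (viewed as a set-valued map $x\mapsto\{f_2(x)\}$) is pseudo strictly $H$-differentiable at $(0,0)$ if and only if $[-\|p\|,\|p\|]\subset H(p)$ for all $p\in\mathbb{R}^2$. -/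
open Metric Set Pointwise

theorem stmt16 (H : EuclideanSpace ℝ (Fin 2) → Set ℝ) (hH : Prefan H) :
    PseudoStrictDiff (fun x : EuclideanSpace ℝ (Fin 2) => {‖x‖}) H 0 0 ↔
    ∀ p : EuclideanSpace ℝ (Fin 2), Icc (-‖p‖) ‖p‖ ⊆ H p := by

  obtain ⟨hvals, ⟨hpos0, hposH⟩, M, hM⟩ := hH
  constructor
  · intro hdiff p t ht
    simp only [mem_Icc] at ht
    by_cases hp : p = (0 : EuclideanSpace ℝ (Fin 2))
    · subst hp
      have ht0 : t = 0 := by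
        simp only [norm_zero, neg_zero] at ht
        linarith [ht.1, ht.2]
      subst ht0
      -- show 0 ∈ H 0
      obtain ⟨y, hy⟩ := (hvals 0).1
      by_contra h0
      have hy0 : y ≠ 0 := by rintro rfl; exact h0 hy
      have hny : 0 < ‖y‖ := norm_pos_iff.mpr hy0
      have hMy : ‖y‖ ≤ M := hM 0 (by simp) y hy
      have hc : (0:ℝ) < (M + 1) / ‖y‖ := div_pos (by linarith) hny
      have := hM 0 (by simp) _ (hpos0 _ hc y hy)
      rw [norm_smul, Real.norm_eq_abs, abs_of_pos hc] at this
      have : M + 1 ≤ M := by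
        calc M + 1 = (M + 1) / ‖y‖ * ‖y‖ := by field_simp
        _ ≤ M := this
      linarith
    · have hpn : 0 < ‖p‖ := norm_pos_iff.mpr hp
      have hcl : IsClosed (H p) := (hvals p).2.2.isClosed
      rw [← hcl.closure_eq, Metric.mem_closure_iff]
      intro ε hε
      have hδpos : 0 < ε / (2 * ‖p‖) := by positivity
      obtain ⟨U, hU, V, hV, hmain⟩ := hdiff _ hδpos
      obtain ⟨r, hr, hrU⟩ := Metric.mem_nhds_iff.mp hU
      obtain ⟨r', hr', hrV⟩ := Metric.mem_nhds_iff.mp hV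
      set a := (‖p‖ + t) / 2 with ha_def
      set b := (‖p‖ - t) / 2 with hb_def
      have ha : 0 ≤ a := by rw [ha_def]; linarith [ht.1]
      have hb : 0 ≤ b := by rw [hb_def]; linarith [ht.2]
      set c := min r r' / (2 * ‖p‖) with hc_def
      have hrr : 0 < min r r' := lt_min hr hr'
      have hc : 0 < c := by positivity
      have hcp : c * ‖p‖ < min r r' := by
        have h2 : c * ‖p‖ = min r r' / 2 := by
          rw [hc_def]; field_simp
        rw [h2]; linarith
      set x : EuclideanSpace ℝ (Fin 2) := (c * a / ‖p‖) • p with hx_def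
      set x' : EuclideanSpace ℝ (Fin 2) := (-(c * b / ‖p‖)) • p with hx'_def
      have hxn : ‖x‖ = c * a := by
        rw [hx_def, norm_smul, Real.norm_eq_abs, abs_of_nonneg (by positivity)]
        field_simp
      have hx'n : ‖x'‖ = c * b := by
        rw [hx'_def, norm_smul, Real.norm_eq_abs, abs_neg, abs_of_nonneg (by positivity)]
        field_simp
      have hab : a + b = ‖p‖ := by rw [ha_def, hb_def]; ring
      have hamb : a - b = t := by rw [ha_def, hb_def]; ring
      have hca : c * a ≤ c * ‖p‖ := by
        apply mul_le_mul_of_nonneg_left _ hc.le; linarith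
      have hcb : c * b ≤ c * ‖p‖ := by
        apply mul_le_mul_of_nonneg_left _ hc.le; linarith
      have hxU : x ∈ U := by
        apply hrU; rw [mem_ball, dist_zero_right, hxn]
        exact lt_of_le_of_lt hca (lt_of_lt_of_le hcp (min_le_left _ _))
      have hx'U : x' ∈ U := by
        apply hrU; rw [mem_ball, dist_zero_right, hx'n]
        exact lt_of_le_of_lt hcb (lt_of_lt_of_le hcp (min_le_left _ _))
      have hyV : ‖x‖ ∈ V := by
        apply hrV; rw [mem_ball, dist_zero_right, Real.norm_eq_abs, hxn,
          abs_of_nonneg (by positivity)]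
        exact lt_of_le_of_lt hca (lt_of_lt_of_le hcp (min_le_right _ _))
      obtain ⟨y', hy', hmem⟩ := hmain x hxU x' hx'U ‖x‖ ⟨rfl, hyV⟩
      simp only [Set.mem_singleton_iff] at hy'
      subst hy'
      have hxx : x - x' = c • p := by
        rw [hx_def, hx'_def, ← sub_smul]
        congr 1
        field_simp
        linear_combination c * hab
      obtain ⟨h, hh, hhb⟩ := hmem
      rw [hxx, hposH c hc] at hh
      obtain ⟨h', hh', rfl⟩ := hh
      refine ⟨h', hh', ?_⟩
      rw [hxx] at hhb
      have hdiffval : ‖x‖ - ‖x'‖ = c * t := by rw [hxn, hx'n]; nlinarith [hamb]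
      rw [hdiffval] at hhb
      have hhb2 : |c * t - c * h'| ≤ ε / (2 * ‖p‖) * (c * ‖p‖) := by
        simpa [smul_eq_mul, norm_smul, Real.norm_eq_abs, abs_of_pos hc] using hhb
      have hkey : c * |t - h'| ≤ c * (ε / 2) := by
        calc c * |t - h'| = |c * t - c * h'| := by
              rw [← mul_sub, abs_mul, abs_of_pos hc]
        _ ≤ ε / (2 * ‖p‖) * (c * ‖p‖) := hhb2
        _ = c * (ε / 2) := by field_simp
      have : |t - h'| ≤ ε / 2 := le_of_mul_le_mul_left (by linarith [hkey]) hc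
      rw [Real.dist_eq]
      linarith
  · intro hIcc δ hδ
    refine ⟨univ, Filter.univ_mem, univ, Filter.univ_mem, ?_⟩
    intro x _ x' _ y hy
    have hy1 : y = ‖x‖ := hy.1
    subst hy1
    refine ⟨‖x'‖, rfl, ‖x‖ - ‖x'‖, ?_, ?_⟩
    · apply hIcc (x - x')
      have := abs_norm_sub_norm_le x x'
      rw [abs_le] at this
      exact ⟨this.1, this.2⟩
    · simp only [sub_self, norm_zero]
      positivity
end

section
/- Let $S:\mathbb{R}^n\rightrightarrows\mathbb{R}^m$ be locally closed at $(\bar x,\bar y)\in\mathrm{gph}(S)$ and $H:\mathbb{R}^n\rightrightarrows\mathbb{R}^m$ a prefan. If $S$ is pseudo strictly $H$-differentiable at $(\bar x,\bar y)$, then for all $p\in\mathbb{R}^n\setminus\{0\}$ and all $(u,v)$ in the limiting (Mordukhovich) normal cone $N_{\mathrm{gph}(S)}(\bar x,\bar y)$, there exists $y\in H(p)$ with $\langle v,y\rangle\ge -\langle u,p\rangle$. -/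
open Metric Set Filter Topology Pointwise
open scoped RealInnerProductSpace

variable {n m : ℕ}

/-- `(u, v)` is a regular normal to `C ⊆ ℝⁿ × ℝᵐ` at `z ∈ C`. -/
def RegNormal (C : Set (EuclideanSpace ℝ (Fin n) × EuclideanSpace ℝ (Fin m)))
    (z : EuclideanSpace ℝ (Fin n) × EuclideanSpace ℝ (Fin m))
    (u : EuclideanSpace ℝ (Fin n)) (v : EuclideanSpace ℝ (Fin m)) : Prop :=
  ∀ ε : ℝ, 0 < ε → ∃ δ : ℝ, 0 < δ ∧ ∀ z' ∈ C, ‖z' - z‖ < δ →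
    ⟪u, z'.1 - z.1⟫ + ⟪v, z'.2 - z.2⟫ ≤ ε * ‖z' - z‖

/-- `(u, v)` is a limiting (Mordukhovich) normal to `C` at `z`. -/
def LimNormal (C : Set (EuclideanSpace ℝ (Fin n) × EuclideanSpace ℝ (Fin m)))
    (z : EuclideanSpace ℝ (Fin n) × EuclideanSpace ℝ (Fin m))
    (u : EuclideanSpace ℝ (Fin n)) (v : EuclideanSpace ℝ (Fin m)) : Prop :=
  ∃ (zk : ℕ → EuclideanSpace ℝ (Fin n) × EuclideanSpace ℝ (Fin m))
    (uk : ℕ → EuclideanSpace ℝ (Fin n)) (vk : ℕ → EuclideanSpace ℝ (Fin m)),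
    (∀ k, zk k ∈ C) ∧ (∀ k, RegNormal C (zk k) (uk k) (vk k)) ∧
    Tendsto zk atTop (nhds z) ∧ Tendsto uk atTop (nhds u) ∧ Tendsto vk atTop (nhds v)

lemma prefan_norm_bound {X Y : Type*} [NormedAddCommGroup X] [NormedSpace ℝ X]
    [NormedAddCommGroup Y] [NormedSpace ℝ Y] (H : X → Set Y)
    (hH : Prefan H) (M : ℝ) (hM : ∀ w : X, ‖w‖ ≤ 1 → ∀ z ∈ H w, ‖z‖ ≤ M)
    (p : X) (hp : p ≠ 0) (h : Y) (hh : h ∈ H p) :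
    ‖h‖ ≤ M * ‖p‖ := by
  have hpn : 0 < ‖p‖ := norm_pos_iff.mpr hp
  have hc : (0:ℝ) < ‖p‖⁻¹ := inv_pos.mpr hpn
  have heq := hH.2.1.2 ‖p‖⁻¹ hc p
  have hmem : ‖p‖⁻¹ • h ∈ H (‖p‖⁻¹ • p) := by
    rw [heq]; exact smul_mem_smul_set hh
  have hw : ‖‖p‖⁻¹ • p‖ ≤ 1 := by
    rw [norm_smul, norm_inv, norm_norm, inv_mul_cancel₀ hpn.ne']
  have hb := hM _ hw _ hmem
  rw [norm_smul, norm_inv, norm_norm] at hb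
  have hM0 : 0 ≤ M := by nlinarith [norm_nonneg h, inv_pos.mpr hpn]
  calc ‖h‖ = ‖p‖ * (‖p‖⁻¹ * ‖h‖) := by field_simp
    _ ≤ ‖p‖ * M := by nlinarith
    _ = M * ‖p‖ := mul_comm _ _

lemma prefan_M_nonneg {X Y : Type*} [NormedAddCommGroup X] [NormedSpace ℝ X]
    [NormedAddCommGroup Y] [NormedSpace ℝ Y] (H : X → Set Y)
    (hH : Prefan H) (M : ℝ) (hM : ∀ w : X, ‖w‖ ≤ 1 → ∀ z ∈ H w, ‖z‖ ≤ M) : 0 ≤ M := by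
  obtain ⟨z, hz⟩ := (hH.1 0).1
  have := hM 0 (by simp) z hz
  linarith [norm_nonneg z]

lemma key_estimate
    (S H : EuclideanSpace ℝ (Fin n) → Set (EuclideanSpace ℝ (Fin m)))
    (xb : EuclideanSpace ℝ (Fin n)) (yb : EuclideanSpace ℝ (Fin m))
    (hH : Prefan H) (M : ℝ) (hM : ∀ w, ‖w‖ ≤ 1 → ∀ z ∈ H w, ‖z‖ ≤ M)
    (hdiff : PseudoStrictDiff S H xb yb)
    (p : EuclideanSpace ℝ (Fin n)) (hp : p ≠ 0)
    (δ : ℝ) (hδ : 0 < δ) :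
    ∃ r : ℝ, 0 < r ∧ ∀ x y, y ∈ S x → ‖x - xb‖ < r → ‖y - yb‖ < r →
      ∀ u v, RegNormal (gph S) (x, y) u v → ∀ ε : ℝ, 0 < ε →
        ∃ h ∈ H p, ⟪v, h⟫ + ⟪u, p⟫ ≥ -(‖v‖ * δ * ‖p‖) - ε := by
  have hpn : 0 < ‖p‖ := norm_pos_iff.mpr hp
  have hM0 : 0 ≤ M := prefan_M_nonneg H hH M hM
  obtain ⟨U, hU, V, hV, hprop⟩ := hdiff δ hδ
  obtain ⟨r1, hr1, hball1⟩ := Metric.mem_nhds_iff.mp hU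
  obtain ⟨r2, hr2, hball2⟩ := Metric.mem_nhds_iff.mp hV
  refine ⟨min (r1/2) r2, by positivity, ?_⟩
  intro x y hy hx hyb u v hreg ε hε
  set C : ℝ := (1 + M + δ) * ‖p‖ with hCdef
  have hC : 0 < C := by positivity
  obtain ⟨δ', hδ', hreg'⟩ := hreg (ε / C) (by positivity)
  set t : ℝ := min (r1 / (2 * ‖p‖)) (δ' / C) / 2 with htdef
  have ht : 0 < t := by positivity
  have ht1 : t < r1 / (2 * ‖p‖) := by
    have : min (r1 / (2 * ‖p‖)) (δ' / C) ≤ r1 / (2 * ‖p‖) := min_le_left _ _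
    have h2 : 0 < r1 / (2 * ‖p‖) := by positivity
    rw [htdef]; linarith
  have ht2 : t < δ' / C := by
    have : min (r1 / (2 * ‖p‖)) (δ' / C) ≤ δ' / C := min_le_right _ _
    have h2 : 0 < δ' / C := by positivity
    rw [htdef]; linarith
  have htp : t * ‖p‖ < r1 / 2 := by
    have h := mul_lt_mul_of_pos_right ht1 hpn
    have he : r1 / (2 * ‖p‖) * ‖p‖ = r1 / 2 := by field_simp
    linarith
  have hxU : x ∈ U := hball1 (by
    rw [mem_ball, dist_eq_norm]
    exact lt_of_lt_of_le hx (le_trans (min_le_left _ _) (by linarith)))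
  have hminr1 : ‖x - xb‖ < r1 / 2 := lt_of_lt_of_le hx (min_le_left _ _)
  have hx'U : x - t • p ∈ U := by
    apply hball1
    rw [mem_ball, dist_eq_norm]
    have h1 : x - t • p - xb = (x - xb) - t • p := by abel
    have h2 : ‖(x - xb) - t • p‖ ≤ ‖x - xb‖ + ‖t • p‖ := norm_sub_le _ _
    have h3 : ‖t • p‖ = t * ‖p‖ := by
      rw [norm_smul, Real.norm_eq_abs, abs_of_pos ht]
    rw [h1]
    linarith
  have hyV : y ∈ V := hball2 (by
    rw [mem_ball, dist_eq_norm]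
    exact lt_of_lt_of_le hyb (min_le_right _ _))
  obtain ⟨y', hy', henl⟩ := hprop x hxU (x - t • p) hx'U y ⟨hy, hyV⟩
  rw [sub_sub_cancel] at henl
  obtain ⟨h', hh', he'⟩ := henl
  rw [hH.2.1.2 t ht p] at hh'
  obtain ⟨h, hhp, rfl⟩ := hh'
  refine ⟨h, hhp, ?_⟩
  have htp' : ‖t • p‖ = t * ‖p‖ := by rw [norm_smul, Real.norm_eq_abs, abs_of_pos ht]
  rw [htp'] at he'
  have hhn : ‖h‖ ≤ M * ‖p‖ := prefan_norm_bound H hH M hM p hp h hhp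
  have hth : ‖t • h‖ = t * ‖h‖ := by rw [norm_smul, Real.norm_eq_abs, abs_of_pos ht]
  have hyy : ‖y' - y‖ ≤ t * ((M + δ) * ‖p‖) := by
    have h1 : y' - y = -((y - y' - t • h) + t • h) := by abel
    rw [h1, norm_neg]
    calc ‖(y - y' - t • h) + t • h‖ ≤ ‖y - y' - t • h‖ + ‖t • h‖ := norm_add_le _ _
      _ ≤ δ * (t * ‖p‖) + t * ‖h‖ := by rw [hth]; exact add_le_add he' le_rfl
      _ ≤ t * ((M + δ) * ‖p‖) := by nlinarith
  have hmem : ((x - t • p, y') : EuclideanSpace ℝ (Fin n) × EuclideanSpace ℝ (Fin m)) ∈ gph S := hy'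
  have hnormz : ‖((x - t • p, y') : EuclideanSpace ℝ (Fin n) × EuclideanSpace ℝ (Fin m)) - (x, y)‖ ≤ t * C := by
    rw [Prod.norm_def]
    simp only [Prod.fst_sub, Prod.snd_sub]
    have h1 : (x - t • p) - x = -(t • p) := by abel
    rw [max_le_iff]
    constructor
    · rw [h1, norm_neg, htp', hCdef]
      nlinarith [mul_nonneg (mul_nonneg ht.le (add_nonneg hM0 hδ.le)) hpn.le]
    · rw [hCdef]; nlinarith
  have hlt : ‖((x - t • p, y') : EuclideanSpace ℝ (Fin n) × EuclideanSpace ℝ (Fin m)) - (x, y)‖ < δ' := by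
    have : t * C < δ' := (lt_div_iff₀ hC).mp ht2
    linarith
  have hineq := hreg' _ hmem hlt
  have he2 : ‖y - y' - t • h‖ ≤ δ * (t * ‖p‖) := he'
  have hinner_e : |⟪v, y - y' - t • h⟫| ≤ ‖v‖ * (δ * (t * ‖p‖)) := by
    calc |⟪v, y - y' - t • h⟫| ≤ ‖v‖ * ‖y - y' - t • h‖ := abs_real_inner_le_norm v _
      _ ≤ ‖v‖ * (δ * (t * ‖p‖)) := mul_le_mul_of_nonneg_left he2 (norm_nonneg v)
  have hfst : ((x - t • p, y') : EuclideanSpace ℝ (Fin n) × EuclideanSpace ℝ (Fin m)).1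
      - ((x, y) : EuclideanSpace ℝ (Fin n) × EuclideanSpace ℝ (Fin m)).1 = -(t • p) := by
    simp
  have hsnd : ((x - t • p, y') : EuclideanSpace ℝ (Fin n) × EuclideanSpace ℝ (Fin m)).2
      - ((x, y) : EuclideanSpace ℝ (Fin n) × EuclideanSpace ℝ (Fin m)).2
      = -(t • h) - (y - y' - t • h) := by simp; abel
  rw [hfst, hsnd, inner_neg_right, inner_sub_right, inner_neg_right,
    real_inner_smul_right, real_inner_smul_right] at hineq
  have hrhs : ε / C * ‖((x - t • p, y') : EuclideanSpace ℝ (Fin n) × EuclideanSpace ℝ (Fin m)) - (x, y)‖ ≤ ε * t := by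
    have h4 := mul_le_mul_of_nonneg_left hnormz (le_of_lt (div_pos hε hC))
    have h5 : ε / C * (t * C) = ε * t := by field_simp
    linarith
  have hkey : t * (-(‖v‖ * δ * ‖p‖) - ε) ≤ t * (⟪v, h⟫ + ⟪u, p⟫) := by
    obtain ⟨hl, hr⟩ := abs_le.mp hinner_e
    have hq1 : t * (-(‖v‖ * δ * ‖p‖) - ε) = -(‖v‖ * (δ * (t * ‖p‖))) - ε * t := by ring
    have hq2 : t * (⟪v, h⟫ + ⟪u, p⟫) = t * ⟪v, h⟫ + t * ⟪u, p⟫ := by ring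
    rw [hq1, hq2]
    linarith
  exact (mul_le_mul_iff_right₀ ht).mp hkey


theorem stmt19
    (S : EuclideanSpace ℝ (Fin n) → Set (EuclideanSpace ℝ (Fin m)))
    (H : EuclideanSpace ℝ (Fin n) → Set (EuclideanSpace ℝ (Fin m)))
    (xb : EuclideanSpace ℝ (Fin n)) (yb : EuclideanSpace ℝ (Fin m))
    (hgph : yb ∈ S xb) (hloc : LocallyClosedAt S xb yb) (hH : Prefan H)
    (hdiff : PseudoStrictDiff S H xb yb) :
    ∀ p : EuclideanSpace ℝ (Fin n), p ≠ 0 →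
      ∀ u v, LimNormal (gph S) (xb, yb) u v →
        ∃ y ∈ H p, ⟪v, y⟫ ≥ -⟪u, p⟫ := by
  obtain ⟨M, hM⟩ := hH.2.2
  intro p hp u v hlim
  obtain ⟨zk, uk, vk, hzkC, hzkreg, hzk, huk, hvk⟩ := hlim
  obtain ⟨hne, hconv, hcpt⟩ := hH.1 p
  have hpn : 0 < ‖p‖ := norm_pos_iff.mpr hp
  have hcont : ∀ k : ℕ, ContinuousOn (fun y => ⟪vk k, y⟫) (H p) :=
    fun k => (Continuous.inner continuous_const continuous_id).continuousOn
  choose yk hykmem hykmax using fun k => hcpt.exists_isMaxOn hne (hcont k)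
  have claimA : ∀ η : ℝ, 0 < η → ∀ᶠ k in atTop, -η ≤ ⟪vk k, yk k⟫ + ⟪uk k, p⟫ := by
    intro η hη
    set B : ℝ := ‖v‖ + 1 with hBdef
    have hBpos : 0 < B := by positivity
    set δ : ℝ := η / (2 * (B * ‖p‖ + 1)) with hδdef
    have hδ : 0 < δ := by positivity
    clear_value B δ
    obtain ⟨r, hr, hkeyr⟩ := key_estimate S H xb yb hH M hM hdiff p hp δ hδ
    have hv_ev : ∀ᶠ k in atTop, ‖vk k‖ ≤ B := by
      have h1 : Tendsto (fun k => ‖vk k‖) atTop (nhds ‖v‖) := hvk.norm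
      have h2 := h1.eventually_lt_const (show ‖v‖ < B by rw [hBdef]; linarith)
      filter_upwards [h2] with k hk using hk.le
    have hz_ev : ∀ᶠ k in atTop, ‖(zk k).1 - xb‖ < r ∧ ‖(zk k).2 - yb‖ < r := by
      have h1 : Tendsto (fun k => ‖zk k - (xb, yb)‖) atTop (nhds 0) := by
        have := (tendsto_iff_norm_sub_tendsto_zero).mp hzk
        exact this
      have h2 := h1.eventually_lt_const hr
      filter_upwards [h2] with k hk
      have hfst : ‖(zk k).1 - xb‖ ≤ ‖zk k - (xb, yb)‖ := by
        have := norm_fst_le (zk k - (xb, yb))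
        simpa using this
      have hsnd : ‖(zk k).2 - yb‖ ≤ ‖zk k - (xb, yb)‖ := by
        have := norm_snd_le (zk k - (xb, yb))
        simpa using this
      exact ⟨lt_of_le_of_lt hfst hk, lt_of_le_of_lt hsnd hk⟩
    filter_upwards [hv_ev, hz_ev] with k hvB hzc
    obtain ⟨h1, h2⟩ := hzc
    obtain ⟨h, hhmem, hineq⟩ := hkeyr (zk k).1 (zk k).2 (hzkC k) h1 h2 (uk k) (vk k)
      (by rw [Prod.mk.eta]; exact hzkreg k) (η / 2) (by linarith)
    have hmax : ⟪vk k, h⟫ ≤ ⟪vk k, yk k⟫ := hykmax k hhmem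
    have hbnd : ‖vk k‖ * δ * ‖p‖ ≤ η / 2 := by
      have ha : (0:ℝ) ≤ B * ‖p‖ := by positivity
      have hstep : ‖vk k‖ * δ * ‖p‖ ≤ δ * (B * ‖p‖) := by
        have h6 := mul_le_mul_of_nonneg_right (mul_le_mul_of_nonneg_right hvB hδ.le) hpn.le
        nlinarith [h6]
      have hstep2 : δ * (B * ‖p‖) ≤ η / 2 := by
        rw [hδdef, div_mul_eq_mul_div, div_le_div_iff₀ (by positivity) (by norm_num : (0:ℝ) < 2)]
        nlinarith
      linarith
    linarith
  obtain ⟨y, hyH, φ, hφ, hconvy⟩ := hcpt.tendsto_subseq hykmem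
  have hlimL : Tendsto (fun j => ⟪vk (φ j), yk (φ j)⟫ + ⟪uk (φ j), p⟫) atTop
      (nhds (⟪v, y⟫ + ⟪u, p⟫)) := by
    apply Tendsto.add
    · exact Tendsto.inner (hvk.comp hφ.tendsto_atTop) hconvy
    · exact Tendsto.inner (huk.comp hφ.tendsto_atTop) tendsto_const_nhds
  have hL : 0 ≤ ⟪v, y⟫ + ⟪u, p⟫ := by
    by_contra hcon
    push_neg at hcon
    set η : ℝ := -(⟪v, y⟫ + ⟪u, p⟫) / 2 with hηdef
    have hη : 0 < η := by rw [hηdef]; linarith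
    have hev := (hφ.tendsto_atTop).eventually (claimA η hη)
    have := ge_of_tendsto hlimL hev
    rw [hηdef] at this
    linarith
  exact ⟨y, hyH, by linarith⟩
end
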